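/- (Theorem 2, second claim: lower bound on the loss-to-go.) For any n-round dynamic inference model, any contextual loss function ℓ : 𝒳 × 𝒴 × 𝒴̂ → ℝ, any Markov estimation strategy ψⁿ = (ψ₁,…,ψₙ) with ψᵢ : 𝒳 → 𝒴̂, any round i ∈ {1,…,n}, and any observation x ∈ 𝒳, the loss-to-go satisfies Vᵢ(x; ψⁿ) ≥ V*ᵢ(x), where V*ᵢ is defined by the dynamic-programming recursion. -/

import Mathlib

noncomputable section

/-- Expectation of a real-valued function under a probability mass function on a finite type. -/
def pexp {α : Type*} [Fintype α] (p : PMF α) (f : α → ℝ) : ℝ :=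
  ∑ a, (p a).toReal * f a

/-- A (history-dependent) estimation strategy: the round-`i` estimator maps the current
observation `Xᵢ`, the past observations `X^{i-1}` and the past revealed quantities `Y^{i-1}`
(together forming `(X^i, Y^{i-1})`) to an estimate `Ŷᵢ`. -/
abbrev Strategy (𝓧 𝓨 𝓨h : Type*) : Type _ := ℕ → 𝓧 → List 𝓧 → List 𝓨 → 𝓨h

/-- The strategy induced by a sequence of Markov estimators `ψᵢ : 𝓧 → 𝓨h`. -/
def markovStrategy {𝓧 𝓨 𝓨h : Type*} (ψ : ℕ → 𝓧 → 𝓨h) : Strategy 𝓧 𝓨 𝓨h :=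
  fun i x _ _ => ψ i x

/-- Replace the round-`n` estimator of a strategy by another one. -/
def replaceRound {𝓧 𝓨 𝓨h : Type*} (ψ : Strategy 𝓧 𝓨 𝓨h) (n : ℕ)
    (ψn : Strategy 𝓧 𝓨 𝓨h) : Strategy 𝓧 𝓨 𝓨h :=
  fun i x hx hy => if i = n then ψn i x hx hy else ψ i x hx hy

/-- The observation-estimate loss `ℓ̄ᵢ(x, yh) = E_{Y ∼ νᵢ(x)}[ℓ(x, Y, yh)]`. -/
def lbar {𝓧 𝓨 𝓨h : Type*} [Fintype 𝓨] (ν : ℕ → 𝓧 → PMF 𝓨)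
    (ℓ : 𝓧 → 𝓨 → 𝓨h → ℝ) (i : ℕ) (x : 𝓧) (yh : 𝓨h) : ℝ :=
  pexp (ν i x) fun y => ℓ x y yh

/-- `lossFrom κ ν L ψ i m x hx hy` : expected accumulated loss over `m` rounds (rounds
`i, i+1, …, i+m-1`), starting at round `i` with current observation `x`, past observation
history `hx` and past quantity history `hy`, under the (possibly round-dependent) contextual
loss `L` and the strategy `ψ`.  The process evolves as `Yᵢ ∼ νᵢ(Xᵢ)` (conditionally
independent of everything else given `Xᵢ`), `Ŷᵢ = ψᵢ(X^i, Y^{i-1})`,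
`X_{i+1} ∼ κ_{i+1}(Xᵢ, Ŷᵢ)`. -/
def lossFrom {𝓧 𝓨 𝓨h : Type*} [Fintype 𝓧] [Fintype 𝓨]
    (κ : ℕ → 𝓧 → 𝓨h → PMF 𝓧) (ν : ℕ → 𝓧 → PMF 𝓨)
    (L : ℕ → 𝓧 → 𝓨 → 𝓨h → ℝ) (ψ : Strategy 𝓧 𝓨 𝓨h) :
    ℕ → ℕ → 𝓧 → List 𝓧 → List 𝓨 → ℝ
  | _, 0, _, _, _ => 0
  | i, m + 1, x, hx, hy =>
      pexp (ν i x) fun y =>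
        L i x y (ψ i x hx hy) +
          pexp (κ (i + 1) x (ψ i x hx hy)) fun x' =>
            lossFrom κ ν L ψ (i + 1) m x' (hx ++ [x]) (hy ++ [y])

/-- The inference loss `J(ψ) = E[∑_{i=1}^n ℓ(Xᵢ, Yᵢ, Ŷᵢ)]` of strategy `ψ` for the
`n`-round dynamic inference problem with initial distribution `P₁`. -/
def J {𝓧 𝓨 𝓨h : Type*} [Fintype 𝓧] [Fintype 𝓨] (P₁ : PMF 𝓧)
    (κ : ℕ → 𝓧 → 𝓨h → PMF 𝓧) (ν : ℕ → 𝓧 → PMF 𝓨)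
    (ℓ : 𝓧 → 𝓨 → 𝓨h → ℝ) (n : ℕ) (ψ : Strategy 𝓧 𝓨 𝓨h) : ℝ :=
  pexp P₁ fun x => lossFrom κ ν (fun _ => ℓ) ψ 1 n x [] []

/-- `Eat κ ν g ψ i s x hx hy` : the expectation `E[g(X_{i+s}, Y_{i+s}, Ŷ_{i+s})]` of a
single-round quantity at round `i + s`, for the process started at round `i` with current
observation `x` and histories `hx`, `hy`, run under the strategy `ψ`. -/
def Eat {𝓧 𝓨 𝓨h : Type*} [Fintype 𝓧] [Fintype 𝓨]
    (κ : ℕ → 𝓧 → 𝓨h → PMF 𝓧) (ν : ℕ → 𝓧 → PMF 𝓨)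
    (g : 𝓧 → 𝓨 → 𝓨h → ℝ) (ψ : Strategy 𝓧 𝓨 𝓨h) :
    ℕ → ℕ → 𝓧 → List 𝓧 → List 𝓨 → ℝ
  | i, 0, x, hx, hy => pexp (ν i x) fun y => g x y (ψ i x hx hy)
  | i, s + 1, x, hx, hy =>
      pexp (ν i x) fun y =>
        pexp (κ (i + 1) x (ψ i x hx hy)) fun x' =>
          Eat κ ν g ψ (i + 1) s x' (hx ++ [x]) (hy ++ [y])

/-- The dynamic-programming value function: `Vstar κ ν ℓ i m x` is `V*ᵢ(x)` when exactly `m`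
rounds follow round `i` (so round `i` is the last round iff `m = 0`):
`V*ᵢ(x) = min_{yh} Q*ᵢ(x, yh)`, with `Q*` as in `Qstar`. -/
def Vstar {𝓧 𝓨 𝓨h : Type*} [Fintype 𝓧] [Fintype 𝓨]
    (κ : ℕ → 𝓧 → 𝓨h → PMF 𝓧) (ν : ℕ → 𝓧 → PMF 𝓨)
    (ℓ : 𝓧 → 𝓨 → 𝓨h → ℝ) : ℕ → ℕ → 𝓧 → ℝ
  | i, 0, x => ⨅ yh, lbar ν ℓ i x yh
  | i, m + 1, x =>
      ⨅ yh, (lbar ν ℓ i x yh + pexp (κ (i + 1) x yh) fun x' => Vstar κ ν ℓ (i + 1) m x')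

/-- The dynamic-programming Q-function: `Qstar κ ν ℓ i m x yh` is `Q*ᵢ(x, yh)` when exactly `m`
rounds follow round `i`: `Q*ₙ(x,yh) = ℓ̄ₙ(x,yh)` in the last round, and otherwise
`Q*ᵢ(x,yh) = ℓ̄ᵢ(x,yh) + E_{x' ∼ κ_{i+1}(x,yh)}[V*_{i+1}(x')]`. -/
def Qstar {𝓧 𝓨 𝓨h : Type*} [Fintype 𝓧] [Fintype 𝓨]
    (κ : ℕ → 𝓧 → 𝓨h → PMF 𝓧) (ν : ℕ → 𝓧 → PMF 𝓨)
    (ℓ : 𝓧 → 𝓨 → 𝓨h → ℝ) : ℕ → ℕ → 𝓧 → 𝓨h → ℝ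
  | i, 0, x, yh => lbar ν ℓ i x yh
  | i, m + 1, x, yh =>
      lbar ν ℓ i x yh + pexp (κ (i + 1) x yh) fun x' => Vstar κ ν ℓ (i + 1) m x'

lemma pexp_mono' {α : Type*} [Fintype α] (p : PMF α) {f g : α → ℝ}
    (h : ∀ a, f a ≤ g a) : pexp p f ≤ pexp p g := by
  apply Finset.sum_le_sum
  intro a _
  exact mul_le_mul_of_nonneg_left (h a) ENNReal.toReal_nonneg

lemma pexp_const' {α : Type*} [Fintype α] (p : PMF α) (c : ℝ) :
    pexp p (fun _ => c) = c := by
  unfold pexp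
  rw [← Finset.sum_mul]
  have h1 : ∑ a, (p a).toReal = 1 := by
    have := p.tsum_coe
    rw [tsum_eq_sum (s := Finset.univ) (by simp)] at this
    rw [← ENNReal.toReal_sum (by intro a _; exact (p.apply_lt_top a).ne), this,
      ENNReal.toReal_one]
  rw [h1, one_mul]

lemma pexp_add' {α : Type*} [Fintype α] (p : PMF α) (f g : α → ℝ) :
    pexp p (fun a => f a + g a) = pexp p f + pexp p g := by
  unfold pexp
  rw [← Finset.sum_add_distrib]
  congr 1; ext a; ring

lemma Vstar_le_loss {𝓧 𝓨 𝓨h : Type*} [Fintype 𝓧] [Fintype 𝓨] [Fintype 𝓨h] [Nonempty 𝓨h]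
    (κ : ℕ → 𝓧 → 𝓨h → PMF 𝓧) (ν : ℕ → 𝓧 → PMF 𝓨)
    (ℓ : 𝓧 → 𝓨 → 𝓨h → ℝ) (ψ : ℕ → 𝓧 → 𝓨h) :
    ∀ (m i : ℕ) (x : 𝓧) (hx : List 𝓧) (hy : List 𝓨),
      Vstar κ ν ℓ i m x ≤
        lossFrom κ ν (fun _ => ℓ) (markovStrategy ψ) i (m + 1) x hx hy := by
  intro m
  induction m with
  | zero =>
    intro i x hx hy
    have h : lossFrom κ ν (fun _ => ℓ) (markovStrategy ψ) i 1 x hx hy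
        = lbar ν ℓ i x (ψ i x) := by
      simp [lossFrom, markovStrategy, lbar, pexp_const']
    rw [h]
    exact ciInf_le (Set.Finite.bddBelow (Set.finite_range _)) _
  | succ m ih =>
    intro i x hx hy
    have step : lbar ν ℓ i x (ψ i x) +
        (pexp (κ (i + 1) x (ψ i x)) fun x' => Vstar κ ν ℓ (i + 1) m x') ≤
        lossFrom κ ν (fun _ => ℓ) (markovStrategy ψ) i (m + 2) x hx hy := by
      show _ ≤ pexp (ν i x) fun y =>
        ℓ x y (markovStrategy ψ i x hx hy) +
          pexp (κ (i + 1) x (markovStrategy ψ i x hx hy)) fun x' =>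
            lossFrom κ ν (fun _ => ℓ) (markovStrategy ψ) (i + 1) (m + 1) x' (hx ++ [x]) (hy ++ [y])
      have hmono : ∀ y, ℓ x y (ψ i x) +
          (pexp (κ (i + 1) x (ψ i x)) fun x' => Vstar κ ν ℓ (i + 1) m x') ≤
          ℓ x y (markovStrategy ψ i x hx hy) +
            pexp (κ (i + 1) x (markovStrategy ψ i x hx hy)) fun x' =>
              lossFrom κ ν (fun _ => ℓ) (markovStrategy ψ) (i + 1) (m + 1) x'
                (hx ++ [x]) (hy ++ [y]) := by
        intro y
        apply add_le_add_right
        exact pexp_mono' _ (fun x' => ih (i + 1) x' (hx ++ [x]) (hy ++ [y]))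
      calc lbar ν ℓ i x (ψ i x) +
            (pexp (κ (i + 1) x (ψ i x)) fun x' => Vstar κ ν ℓ (i + 1) m x')
          = pexp (ν i x) (fun y => ℓ x y (ψ i x) +
            (pexp (κ (i + 1) x (ψ i x)) fun x' => Vstar κ ν ℓ (i + 1) m x')) := by
            rw [pexp_add', pexp_const']; rfl
        _ ≤ _ := pexp_mono' _ hmono
    calc Vstar κ ν ℓ i (m + 1) x ≤ lbar ν ℓ i x (ψ i x) +
          (pexp (κ (i + 1) x (ψ i x)) fun x' => Vstar κ ν ℓ (i + 1) m x') := by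
          exact ciInf_le (Set.Finite.bddBelow (Set.finite_range _)) _
      _ ≤ _ := step

/-- **Theorem 2, second claim: lower bound on the loss-to-go.** For any
`n`-round dynamic inference model, contextual loss `ℓ`, Markov estimation strategy `ψ`,
round `i ∈ {1,…,n}` and observation `x`, the loss-to-go
`Vᵢ(x; ψ) = E[∑_{j=i}^n ℓ(Xⱼ, Yⱼ, Ŷⱼ) | Xᵢ = x]` (the expected accumulated loss of the
process started at `Xᵢ = x` and run under `ψ` for the remaining `n - i + 1` rounds) is at
least the dynamic-programming value `V*ᵢ(x)`. -/
theorem loss_to_go_ge_Vstar {𝓧 𝓨 𝓨h : Type*} [Fintype 𝓧] [Nonempty 𝓧] [Fintype 𝓨] [Nonempty 𝓨]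
    [Fintype 𝓨h] [Nonempty 𝓨h]
    (P₁ : PMF 𝓧) (κ : ℕ → 𝓧 → 𝓨h → PMF 𝓧) (ν : ℕ → 𝓧 → PMF 𝓨)
    (ℓ : 𝓧 → 𝓨 → 𝓨h → ℝ) (ψ : ℕ → 𝓧 → 𝓨h) (n i : ℕ) (hi1 : 1 ≤ i) (hin : i ≤ n) (x : 𝓧) :
    lossFrom κ ν (fun _ => ℓ) (markovStrategy ψ) i (n - i + 1) x [] [] ≥ Vstar κ ν ℓ i (n - i) x := by
  exact Vstar_le_loss κ ν ℓ ψ (n - i) i x [] []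

end
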